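/- (Proposition 3.3.7.) There exists a constant C ∈ ℕ such that for every integer n ≥ 1 there exist real polynomials p and q, each of degree at most C·n⁴, with q(x) ≥ 1 for all x ∈ [0,1] and | √(|x − 1/2|) − p(x)/q(x) | ≤ 2^{−n} for all x ∈ [0,1]. -/

import Mathlib

open Polynomial Finset
noncomputable section
namespace SqrtApprox

lemma sum_pair (f : ℕ → ℝ) (K : ℕ) :
    ∑ i ∈ range (2*K), f i = ∑ j ∈ range K, (f (2*j) + f (2*j+1)) := by
  induction K with
  | zero => simp
  | succ k ih =>
      have : 2*(k+1) = (2*k)+1+1 := by ring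
      rw [this, sum_range_succ, sum_range_succ, ih, sum_range_succ]
      ring

def evenP (P : ℝ[X]) : ℝ[X] := ∑ i ∈ range (P.natDegree + 1), C (P.coeff (2*i)) * X^i
def oddP (P : ℝ[X]) : ℝ[X] := ∑ i ∈ range (P.natDegree + 1), C (P.coeff (2*i+1)) * X^i

lemma natDegree_evenP_le (P : ℝ[X]) : (evenP P).natDegree ≤ P.natDegree := by
  refine natDegree_sum_le_of_forall_le _ _ fun i hi => ?_
  calc (C (P.coeff (2*i)) * X^i).natDegree ≤ 0 + i := by
        refine natDegree_mul_le.trans (add_le_add (natDegree_C _).le (natDegree_X_pow _).le)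
    _ ≤ P.natDegree := by simpa using Nat.lt_succ_iff.mp (mem_range.mp hi)

lemma natDegree_oddP_le (P : ℝ[X]) : (oddP P).natDegree ≤ P.natDegree := by
  refine natDegree_sum_le_of_forall_le _ _ fun i hi => ?_
  calc (C (P.coeff (2*i+1)) * X^i).natDegree ≤ 0 + i := by
        refine natDegree_mul_le.trans (add_le_add (natDegree_C _).le (natDegree_X_pow _).le)
    _ ≤ P.natDegree := by simpa using Nat.lt_succ_iff.mp (mem_range.mp hi)

lemma eval_expand (P : ℝ[X]) (x : ℝ) :
    P.eval x = ∑ i ∈ range (2*(P.natDegree+1)), P.coeff i * x^i :=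
  P.eval_eq_sum_range' (by omega) x

lemma evenP_eval (P : ℝ[X]) (x : ℝ) : 2 * (evenP P).eval (x^2) = P.eval x + P.eval (-x) := by
  rw [eval_expand P x, eval_expand P (-x), ← sum_add_distrib, sum_pair]
  rw [evenP, eval_finset_sum, mul_sum]
  refine sum_congr rfl fun j hj => ?_
  have h1 : ((-x):ℝ)^(2*j) = x^(2*j) := by
    rw [pow_mul, pow_mul, neg_sq]
  have h2 : ((-x):ℝ)^(2*j+1) = -(x^(2*j+1)) := by
    rw [pow_succ, pow_succ, h1]; ring
  simp only [eval_mul, eval_C, eval_pow, eval_X]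
  rw [h1] at *
  rw [h2, ← pow_mul]
  ring

lemma oddP_eval (P : ℝ[X]) (x : ℝ) : 2 * x * (oddP P).eval (x^2) = P.eval x - P.eval (-x) := by
  rw [eval_expand P x, eval_expand P (-x), ← sum_sub_distrib, sum_pair]
  rw [oddP, eval_finset_sum, mul_sum]
  refine sum_congr rfl fun j hj => ?_
  have h1 : ((-x):ℝ)^(2*j) = x^(2*j) := by
    rw [pow_mul, pow_mul, neg_sq]
  have h2 : ((-x):ℝ)^(2*j+1) = -(x^(2*j+1)) := by
    rw [pow_succ, pow_succ, h1]; ring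
  simp only [eval_mul, eval_C, eval_pow, eval_X]
  rw [h1, h2, ← pow_mul]
  ring



open Classical in
lemma prod_abs_le (a : ℝ) (ha0 : 0 < a) (ha1 : a < 1) (m L : ℕ) (hm : 1 ≤ m) (hL : 2*L ≤ m)
    (y : ℝ) (hy1 : a^m ≤ y) (hy2 : y ≤ 1) :
    ∏ k ∈ range m, |a^k - y| ≤
      Real.exp (-∑ i ∈ range L, a^(i+1)) * ∏ k ∈ range m, (a^k + y) := by
  have hy0 : 0 < y := lt_of_lt_of_le (pow_pos ha0 m) hy1
  set j := Nat.findGreatest (fun k => y ≤ a^k) (m-1) with hjdef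
  have hj1 : y ≤ a^j := Nat.findGreatest_spec (P := fun k => y ≤ a^k) (Nat.zero_le _)
    (by simpa using hy2)
  have hjle : j ≤ m-1 := Nat.findGreatest_le _
  have hj2 : a^(j+1) ≤ y := by
    by_cases h : j + 1 ≤ m - 1
    · have := Nat.findGreatest_is_greatest (P := fun k => y ≤ a^k) (Nat.lt_succ_self j) h
      exact le_of_not_ge this
    · have hjm : j + 1 = m := by omega
      rw [hjm]; exact hy1
  set d : ℕ → ℕ := fun k => if k ≤ j then j+1-k else k-j with hd
  have key : ∀ k ∈ range m, |a^k - y| ≤ Real.exp (-(a^(d k))) * (a^k + y) := by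
    intro k hk
    have hkm := mem_range.mp hk
    rcases le_or_gt k j with hkj | hkj
    · -- k ≤ j
      set b := a^(j+1-k) with hbdef
      have hab : a^(j+1) = a^k * b := by rw [← pow_add]; congr 1; omega
      have h1k : y ≤ a^k := hj1.trans (pow_le_pow_of_le_one ha0.le ha1.le hkj)
      rw [abs_of_nonneg (sub_nonneg.2 h1k)]
      have hb0 : 0 < b := pow_pos ha0 _
      have hb1 : b ≤ 1 := pow_le_one₀ ha0.le ha1.le
      have hexp : 1 - b ≤ Real.exp (-b) := by
        have := Real.add_one_le_exp (-b); linarith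
      have hyb : a^k * b ≤ y := by rw [← hab]; exact hj2
      have hdk : d k = j+1-k := if_pos hkj
      rw [hdk]
      have hak : (0:ℝ) < a^k := pow_pos ha0 _
      have hmono : (1-b) * (a^k + y) ≤ Real.exp (-b) * (a^k + y) :=
        mul_le_mul_of_nonneg_right hexp (by positivity)
      nlinarith [mul_le_of_le_one_left hy0.le hb1]
    · -- j < k
      set b := a^(k-j) with hbdef
      have hab : a^k = a^j * b := by rw [← pow_add]; congr 1; omega
      have hky : a^k ≤ y := le_trans (pow_le_pow_of_le_one ha0.le ha1.le (by omega)) hj2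
      rw [abs_sub_comm, abs_of_nonneg (sub_nonneg.2 hky)]
      have hb0 : 0 < b := pow_pos ha0 _
      have hb1 : b ≤ 1 := pow_le_one₀ ha0.le ha1.le
      have hexp : 1 - b ≤ Real.exp (-b) := by
        have := Real.add_one_le_exp (-b); linarith
      have hdk : d k = k-j := if_neg (by omega)
      rw [hdk]
      have hak : (0:ℝ) < a^k := pow_pos ha0 _
      have haj : (0:ℝ) < a^j := pow_pos ha0 _
      have hmono : (1-b) * (a^k + y) ≤ Real.exp (-b) * (a^k + y) :=
        mul_le_mul_of_nonneg_right hexp (by positivity)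
      have hby : b * y ≤ a^k := by
        rw [hab]; calc b * y ≤ b * a^j := mul_le_mul_of_nonneg_left hj1 hb0.le
          _ = a^j * b := mul_comm _ _
      nlinarith [mul_le_of_le_one_left hak.le hb1]
  calc ∏ k ∈ range m, |a^k - y|
      ≤ ∏ k ∈ range m, (Real.exp (-(a^(d k))) * (a^k + y)) :=
        Finset.prod_le_prod (fun k _ => abs_nonneg _) key
    _ = (∏ k ∈ range m, Real.exp (-(a^(d k)))) * ∏ k ∈ range m, (a^k + y) :=
        prod_mul_distrib
    _ ≤ Real.exp (-∑ i ∈ range L, a^(i+1)) * ∏ k ∈ range m, (a^k + y) := by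
        refine mul_le_mul_of_nonneg_right ?_ (Finset.prod_nonneg fun k _ => by positivity)
        rw [← Real.exp_sum]
        refine Real.exp_le_exp.2 ?_
        have hneg : ∑ x ∈ range m, -(a ^ d x) = -∑ x ∈ range m, a ^ d x := by
          simp [Finset.sum_neg_distrib]
        rw [hneg, neg_le_neg_iff]
        -- Σ_{i<L} a^(i+1) ≤ Σ_{k<m} a^(d k)
        rcases le_or_gt L (j+1) with hLj | hLj
        · have hsub : (range L).image (fun i => j - i) ⊆ range m := by
            intro k hk
            simp only [mem_image, mem_range] at hk ⊢
            omega
          have heq : ∑ i ∈ range L, a^(i+1) = ∑ k ∈ (range L).image (fun i => j - i), a^(d k) := by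
            rw [Finset.sum_image (by intro i1 h1 i2 h2 h; dsimp only at h; simp only [mem_coe, mem_range] at h1 h2; omega)]
            refine Finset.sum_congr rfl fun i hi => ?_
            have hi' := mem_range.mp hi
            have : d (j - i) = i + 1 := by
              simp only [hd]; rw [if_pos (by omega)]; omega
            rw [this]
          rw [heq]
          exact Finset.sum_le_sum_of_subset_of_nonneg hsub (fun k _ _ => by positivity)
        · have hsub : (range L).image (fun i => j + 1 + i) ⊆ range m := by
            intro k hk
            simp only [mem_image, mem_range] at hk ⊢
            omega
          have heq : ∑ i ∈ range L, a^(i+1) = ∑ k ∈ (range L).image (fun i => j + 1 + i), a^(d k) := by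
            rw [Finset.sum_image (by intro i1 h1 i2 h2 h; dsimp only at h; omega)]
            refine Finset.sum_congr rfl fun i hi => ?_
            have : d (j + 1 + i) = i + 1 := by
              simp only [hd]; rw [if_neg (by omega)]; omega
            rw [this]
          rw [heq]
          exact Finset.sum_le_sum_of_subset_of_nonneg hsub (fun k _ _ => by positivity)


end SqrtApprox

-- stage definitions
namespace SqrtApprox
open Polynomial Finset

def aa (s : ℕ) : ℝ := 1 - 1/(s:ℝ)
def pN (s : ℕ) : ℝ[X] := ∏ k ∈ range (s^2), (X + C (aa s ^ k))
def NN (s : ℕ) : ℝ[X] := C 2 * X * oddP (pN s)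
def DD (s : ℕ) : ℝ[X] := C 2 * evenP (pN s)

lemma aa_pos {s : ℕ} (hs : 2 ≤ s) : 0 < aa s := by
  have : (2:ℝ) ≤ s := by exact_mod_cast hs
  have h0 : (0:ℝ) < s := by linarith
  have : 1/(s:ℝ) ≤ 1/2 := by
    rw [div_le_div_iff₀ h0 (by norm_num)]; linarith
  unfold aa; linarith

lemma aa_lt_one {s : ℕ} (hs : 2 ≤ s) : aa s < 1 := by
  have : (2:ℝ) ≤ s := by exact_mod_cast hs
  have h0 : (0:ℝ) < 1/(s:ℝ) := by positivity
  unfold aa; linarith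

lemma exp_one_ge_two : (2:ℝ) ≤ Real.exp 1 := by
  have := Real.add_one_le_exp (1:ℝ); linarith

lemma eps_le {s : ℕ} (hs : 16 ≤ s) : Real.exp (-(s:ℝ)/8) ≤ 1/4 := by
  have h1 : Real.exp (-(s:ℝ)/8) ≤ Real.exp (-2) := by
    refine Real.exp_le_exp.2 ?_
    have : (16:ℝ) ≤ s := by exact_mod_cast hs
    linarith
  have h2 : (4:ℝ) ≤ Real.exp 2 := by
    have := exp_one_ge_two
    have h : Real.exp 2 = Real.exp 1 * Real.exp 1 := by
      rw [← Real.exp_add]; norm_num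
    nlinarith
  have h4 : Real.exp (-2) ≤ 1/4 := by
    rw [Real.exp_neg, inv_le_comm₀ (Real.exp_pos 2) (by norm_num)]
    norm_num; linarith
  linarith

lemma aa_ge_exp {s : ℕ} (hs : 2 ≤ s) : Real.exp (-(1/((s:ℝ)-1))) ≤ aa s := by
  have hs' : (2:ℝ) ≤ s := by exact_mod_cast hs
  set u := 1/((s:ℝ)-1) with hu
  have hs1 : (0:ℝ) < (s:ℝ) - 1 := by linarith
  have hu0 : 0 < u := by rw [hu]; positivity
  have h := Real.add_one_le_exp u
  have h2 : Real.exp (-u) = (Real.exp u)⁻¹ := Real.exp_neg u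
  have h3 : (Real.exp u)⁻¹ ≤ (1+u)⁻¹ := by
    apply inv_anti₀ (by positivity) (by linarith)
  have h4 : (1+u)⁻¹ = aa s := by
    unfold aa
    rw [hu]
    have hsne : (s:ℝ) ≠ 0 := by linarith
    field_simp
    ring
  rw [h2, ← h4]; exact h3

lemma aa_pow_s {s : ℕ} (hs : 2 ≤ s) : Real.exp (-2) ≤ aa s ^ s := by
  have hs' : (2:ℝ) ≤ s := by exact_mod_cast hs
  have h1 : Real.exp (-(1/((s:ℝ)-1))) ^ s ≤ aa s ^ s :=
    pow_le_pow_left₀ (Real.exp_pos _).le (aa_ge_exp hs) s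
  have h2 : Real.exp (-(1/((s:ℝ)-1))) ^ s = Real.exp (-(s/((s:ℝ)-1))) := by
    rw [← Real.exp_nat_mul]; congr 1; field_simp
  have h3 : Real.exp (-((s:ℝ)/((s:ℝ)-1))) ≥ Real.exp (-2) := by
    refine Real.exp_le_exp.2 ?_
    have hpos : (0:ℝ) < (s:ℝ)-1 := by linarith
    rw [neg_le_neg_iff, div_le_iff₀ hpos]
    linarith
  rw [h2] at h1; linarith

lemma sum_ge {s : ℕ} (hs : 2 ≤ s) : (s:ℝ)/8 ≤ ∑ i ∈ range s, aa s^(i+1) := by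
  have h8 : (1:ℝ)/8 ≤ Real.exp (-2) := by
    rw [Real.exp_neg, le_inv_comm₀ (by norm_num) (Real.exp_pos 2)]
    have h : Real.exp 2 = Real.exp 1 * Real.exp 1 := by rw [← Real.exp_add]; norm_num
    nlinarith [exp_one_ge_two, Real.exp_one_lt_d9]
  have key : ∀ i ∈ range s, (1:ℝ)/8 ≤ aa s ^ (i+1) := by
    intro i hi
    have hi' := mem_range.mp hi
    calc (1:ℝ)/8 ≤ Real.exp (-2) := h8
      _ ≤ aa s ^ s := aa_pow_s hs
      _ ≤ aa s ^ (i+1) := pow_le_pow_of_le_one (aa_pos hs).le (aa_lt_one hs).le (by omega)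
  calc (s:ℝ)/8 = ∑ _i ∈ range s, (1:ℝ)/8 := by
        rw [Finset.sum_const, card_range, nsmul_eq_mul]; ring
    _ ≤ ∑ i ∈ range s, aa s^(i+1) := Finset.sum_le_sum key

lemma tail_le {s : ℕ} (hs : 2 ≤ s) : aa s^(s^2) ≤ Real.exp (-(s:ℝ)) := by
  have hs' : (2:ℝ) ≤ s := by exact_mod_cast hs
  have h1 : aa s ≤ Real.exp (-(1/(s:ℝ))) := by
    have := Real.add_one_le_exp (-(1/(s:ℝ)))
    unfold aa; linarith
  calc aa s^(s^2) ≤ Real.exp (-(1/(s:ℝ)))^(s^2) :=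
        pow_le_pow_left₀ (aa_pos hs).le h1 _
    _ = Real.exp (-(s:ℝ)) := by
        rw [← Real.exp_nat_mul]
        congr 1
        push_cast
        field_simp

-- main stage lemma
lemma stage {s : ℕ} (hs : 16 ≤ s) {t : ℝ} (ht0 : 0 ≤ t) (ht1 : t ≤ 1) :
    0 < (DD s).eval t ∧ 0 ≤ (NN s).eval t / (DD s).eval t ∧
    |Real.sqrt t - (NN s).eval t / (DD s).eval t| ≤ 4 * Real.exp (-(s:ℝ)/8) := by
  have hs2 : 2 ≤ s := by omega
  have ha0 := aa_pos hs2
  have ha1 := aa_lt_one hs2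
  set a := aa s with hadef
  set m := s^2 with hmdef
  set y := Real.sqrt t with hydef
  have hy0 : 0 ≤ y := Real.sqrt_nonneg t
  have hy1 : y ≤ 1 := Real.sqrt_le_one.2 ht1
  have hyt : y^2 = t := Real.sq_sqrt ht0
  set A := (pN s).eval y with hAdef
  set B := (pN s).eval (-y) with hBdef
  have hA : A = ∏ k ∈ range m, (y + a^k) := by
    rw [hAdef, pN, eval_prod]
    exact Finset.prod_congr rfl fun k _ => by simp [hadef]
  have hB : B = ∏ k ∈ range m, (a^k - y) := by
    rw [hBdef, pN, eval_prod]
    refine Finset.prod_congr rfl fun k _ => by simp; ring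
  have hApos : 0 < A := by
    rw [hA]; exact Finset.prod_pos fun k _ => by positivity
  have habs : |B| ≤ A := by
    rw [hB, hA, abs_prod]
    refine Finset.prod_le_prod (fun k _ => abs_nonneg _) fun k _ => ?_
    have hak : (0:ℝ) < a^k := pow_pos ha0 _
    rw [abs_le]; constructor <;> nlinarith
  have hD : (DD s).eval t = A + B := by
    have h := evenP_eval (pN s) y
    rw [hyt] at h
    rw [DD, eval_mul, eval_C]
    linarith
  have hN : (NN s).eval t = y * (A - B) := by
    have h := oddP_eval (pN s) y
    rw [hyt] at h
    rw [NN, eval_mul, eval_mul, eval_C, eval_X, hAdef, hBdef, ← h, ← hyt]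
    ring
  have hAmB : 0 ≤ A - B := by
    have : B ≤ |B| := le_abs_self B
    linarith
  have heps : Real.exp (-(s:ℝ)/8) ≤ 1/4 := eps_le hs
  clear_value A B
  have hepspos : 0 < Real.exp (-(s:ℝ)/8) := Real.exp_pos _
  rcases le_or_gt y (a^m) with hcase | hcase
  · -- tail case
    have hBnn : 0 ≤ B := by
      rw [hB]
      refine Finset.prod_nonneg fun k hk => ?_
      have : a^m ≤ a^k := pow_le_pow_of_le_one ha0.le ha1.le (mem_range.mp hk).le
      linarith
    have hDpos : 0 < A + B := by linarith
    refine ⟨by rw [hD]; exact hDpos, ?_, ?_⟩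
    · rw [hN, hD]; positivity
    · rw [hN, hD]
      have hr0 : 0 ≤ y * (A-B) / (A+B) := by positivity
      have hr1 : y * (A-B) / (A+B) ≤ y := by
        rw [div_le_iff₀ hDpos]
        nlinarith
      have htail : y ≤ Real.exp (-(s:ℝ)) := le_trans hcase (tail_le hs2)
      have hee : Real.exp (-(s:ℝ)) ≤ Real.exp (-(s:ℝ)/8) := by
        refine Real.exp_le_exp.2 ?_
        have : (0:ℝ) ≤ s := by positivity
        linarith
      rw [abs_le]; constructor <;> nlinarith
  · -- main case
    have hprod := prod_abs_le a ha0 ha1 m s (Nat.one_le_iff_ne_zero.2 (pow_ne_zero 2 (by omega))) ?hL y hcase.le hy1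
    case hL => rw [hmdef, pow_two]; exact Nat.mul_le_mul_right s hs2
    have hsum := sum_ge hs2
    have hBe : |B| ≤ Real.exp (-(s:ℝ)/8) * A := by
      have h1 : Real.exp (-∑ i ∈ range s, a^(i+1)) ≤ Real.exp (-(s:ℝ)/8) :=
        Real.exp_le_exp.2 (by linarith)
      have h2 : ∏ k ∈ range m, (a^k + y) = A := by
        rw [hA]; exact Finset.prod_congr rfl fun k _ => by ring
      rw [hB, abs_prod]
      calc ∏ k ∈ range m, |a^k - y| ≤
          Real.exp (-∑ i ∈ range s, a^(i+1)) * ∏ k ∈ range m, (a^k + y) := hprod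
        _ ≤ Real.exp (-(s:ℝ)/8) * A := by
            rw [h2]
            exact mul_le_mul_of_nonneg_right h1 hApos.le
    clear hprod hA hB habs
    set e := Real.exp (-(s:ℝ)/8) with hedef
    have hBA : |B| ≤ A/2 := by
      have h3 : e*A ≤ (1/4)*A := mul_le_mul_of_nonneg_right heps hApos.le
      linarith [hBe]
    have hDpos : 0 < A + B := by
      have := neg_abs_le B
      linarith
    refine ⟨by rw [hD]; exact hDpos, ?_, ?_⟩
    · rw [hN, hD]; positivity
    · rw [hN, hD]
      have hkey : y - y * (A-B)/(A+B) = 2*y*B/(A+B) := by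
        field_simp
        ring
      rw [hkey, abs_div, abs_of_pos hDpos, div_le_iff₀ hDpos]
      have h1 : |2*y*B| ≤ 2*y*(e*A) := by
        rw [abs_mul]
        have h2y : |2*y| = 2*y := abs_of_nonneg (by linarith)
        rw [h2y]
        exact mul_le_mul_of_nonneg_left hBe (by linarith)
      have h2 : A/2 ≤ A + B := by
        have := neg_abs_le B
        linarith
      have h3 : 2*y*(e*A) ≤ 2*(e*A) := by
        have := mul_le_of_le_one_right (by positivity : (0:ℝ) ≤ 2*(e*A)) hy1
        linarith [this]
      have h5 : 4*e*(A/2) ≤ 4*e*(A+B) :=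
        mul_le_mul_of_nonneg_left h2 (by linarith [hepspos] : (0:ℝ) ≤ 4*e)
      linarith [h1, h3, h5]

lemma hom_eval (Ap Np Dp : ℝ[X]) (M : ℕ) (hA : Ap.natDegree ≤ M) (x : ℝ)
    (hD : Dp.eval x ≠ 0) :
    (∑ i ∈ range (M+1), C (Ap.coeff i) * Np^i * Dp^(M-i)).eval x
      = Dp.eval x ^ M * Ap.eval (Np.eval x / Dp.eval x) := by
  rw [eval_finset_sum, Polynomial.eval_eq_sum_range' (Nat.lt_succ_of_le hA), Finset.mul_sum]
  refine sum_congr rfl fun i hi => ?_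
  have hiM : i ≤ M := Nat.lt_succ_iff.mp (mem_range.mp hi)
  simp only [eval_mul, eval_C, eval_pow]
  have hsplit : Dp.eval x ^ M = Dp.eval x ^ (M-i) * Dp.eval x ^ i := by
    rw [← pow_add]; congr 1; omega
  rw [hsplit, div_pow]
  field_simp

lemma hom_deg (Ap Np Dp : ℝ[X]) (M K : ℕ) (hN : Np.natDegree ≤ K) (hDp : Dp.natDegree ≤ K) :
    (∑ i ∈ range (M+1), C (Ap.coeff i) * Np^i * Dp^(M-i)).natDegree ≤ M * K := by
  refine natDegree_sum_le_of_forall_le _ _ fun i hi => ?_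
  have hiM : i ≤ M := Nat.lt_succ_iff.mp (mem_range.mp hi)
  calc (C (Ap.coeff i) * Np^i * Dp^(M-i)).natDegree
      ≤ (C (Ap.coeff i) * Np^i).natDegree + (Dp^(M-i)).natDegree := natDegree_mul_le
    _ ≤ (Np^i).natDegree + (Dp^(M-i)).natDegree := by
        have := natDegree_C_mul_le (Ap.coeff i) (Np^i); omega
    _ ≤ i * K + (M-i) * K := by
        have h1 : (Np^i).natDegree ≤ i * Np.natDegree := natDegree_pow_le
        have h2 : (Dp^(M-i)).natDegree ≤ (M-i) * Dp.natDegree := natDegree_pow_le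
        have h3 : i * Np.natDegree ≤ i * K := Nat.mul_le_mul_left i hN
        have h4 : (M-i) * Dp.natDegree ≤ (M-i) * K := Nat.mul_le_mul_left _ hDp
        omega
    _ ≤ M * K := by
        rw [← add_mul]
        exact Nat.mul_le_mul_right K (by omega)

lemma natDegree_pN (s : ℕ) : (pN s).natDegree ≤ s^2 := by
  rw [pN]
  refine (natDegree_prod_le _ _).trans ?_
  calc ∑ k ∈ range (s^2), ((X:ℝ[X]) + C (aa s ^ k)).natDegree
      ≤ ∑ _k ∈ range (s^2), 1 :=
        Finset.sum_le_sum fun k _ => le_of_eq (natDegree_X_add_C _)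
    _ = s^2 := by simp

lemma natDegree_NN (s : ℕ) : (NN s).natDegree ≤ s^2 + 1 := by
  rw [NN]
  refine natDegree_mul_le.trans ?_
  have h1 : (C (2:ℝ) * X).natDegree ≤ 1 :=
    le_trans (natDegree_C_mul_le _ _) natDegree_X.le
  have h2 := (natDegree_oddP_le (pN s)).trans (natDegree_pN s)
  omega

lemma natDegree_DD (s : ℕ) : (DD s).natDegree ≤ s^2 := by
  rw [DD]
  refine natDegree_mul_le.trans ?_
  have h1 : (C (2:ℝ)).natDegree = 0 := natDegree_C _
  have h2 := (natDegree_evenP_le (pN s)).trans (natDegree_pN s)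
  omega

lemma sqrt_diff {a b : ℝ} (ha : 0 ≤ a) (hb : 0 ≤ b) :
    |Real.sqrt a - Real.sqrt b| ≤ Real.sqrt |a - b| := by
  rcases le_total b a with hab | hab
  · rw [abs_of_nonneg (sub_nonneg.2 (Real.sqrt_le_sqrt hab)),
      abs_of_nonneg (sub_nonneg.2 hab)]
    have h1 : Real.sqrt a ≤ Real.sqrt b + Real.sqrt (a - b) := by
      have hb' := Real.sq_sqrt hb
      have hab' := Real.sq_sqrt (sub_nonneg.2 hab)
      have h2 := Real.sqrt_nonneg b
      have h3 := Real.sqrt_nonneg (a-b)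
      rw [← Real.sqrt_sq (by positivity : (0:ℝ) ≤ Real.sqrt b + Real.sqrt (a-b))]
      apply Real.sqrt_le_sqrt
      nlinarith [mul_nonneg h2 h3]
    linarith
  · rw [abs_sub_comm, abs_sub_comm a b]
    rw [abs_of_nonneg (sub_nonneg.2 (Real.sqrt_le_sqrt hab)),
      abs_of_nonneg (sub_nonneg.2 hab)]
    have h1 : Real.sqrt b ≤ Real.sqrt a + Real.sqrt (b - a) := by
      have hb' := Real.sq_sqrt ha
      have hab' := Real.sq_sqrt (sub_nonneg.2 hab)
      have h2 := Real.sqrt_nonneg a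
      have h3 := Real.sqrt_nonneg (b-a)
      rw [← Real.sqrt_sq (by positivity : (0:ℝ) ≤ Real.sqrt a + Real.sqrt (b-a))]
      apply Real.sqrt_le_sqrt
      nlinarith [mul_nonneg h2 h3]
    linarith

def Dp (s : ℕ) : ℝ[X] := C 2 * DD s
def P1 (s : ℕ) : ℝ[X] :=
  ∑ i ∈ range ((s^2+1)+1), C ((NN s).coeff i) * (NN s)^i * (Dp s)^((s^2+1)-i)
def Q1 (s : ℕ) : ℝ[X] :=
  ∑ i ∈ range ((s^2+1)+1), C ((DD s).coeff i) * (NN s)^i * (Dp s)^((s^2+1)-i)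
def gP : ℝ[X] := (X - C (1/2))^2
def Pf (s : ℕ) : ℝ[X] := C (Real.sqrt 2) * ((P1 s).comp gP)
def Qf (s : ℕ) : ℝ[X] := (Q1 s).comp gP

lemma Pf_deg (s : ℕ) : (Pf s).natDegree ≤ 2*(s^2+1)^2 := by
  rw [Pf]
  refine (natDegree_C_mul_le _ _).trans ?_
  refine natDegree_comp_le.trans ?_
  have h1 : (P1 s).natDegree ≤ (s^2+1)*(s^2+1) := by
    rw [P1]
    exact hom_deg _ _ _ _ _ (natDegree_NN s)
      ((natDegree_C_mul_le _ _).trans ((natDegree_DD s).trans (by omega)))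
  have h2 : gP.natDegree ≤ 2 := by
    rw [gP]
    refine natDegree_pow_le.trans ?_
    rw [natDegree_X_sub_C]
  calc (P1 s).natDegree * gP.natDegree ≤ ((s^2+1)*(s^2+1)) * 2 :=
        Nat.mul_le_mul h1 h2
    _ = 2*(s^2+1)^2 := by ring

lemma Qf_deg (s : ℕ) : (Qf s).natDegree ≤ 2*(s^2+1)^2 := by
  rw [Qf]
  refine natDegree_comp_le.trans ?_
  have h1 : (Q1 s).natDegree ≤ (s^2+1)*(s^2+1) := by
    rw [Q1]
    exact hom_deg _ _ _ _ _ ((natDegree_NN s))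
      ((natDegree_C_mul_le _ _).trans ((natDegree_DD s).trans (by omega)))
  have h2 : gP.natDegree ≤ 2 := by
    rw [gP]
    refine natDegree_pow_le.trans ?_
    rw [natDegree_X_sub_C]
  calc (Q1 s).natDegree * gP.natDegree ≤ ((s^2+1)*(s^2+1)) * 2 :=
        Nat.mul_le_mul h1 h2
    _ = 2*(s^2+1)^2 := by ring

lemma key {s : ℕ} (hs : 16 ≤ s) {x : ℝ} (hx : x ∈ Set.Icc (0:ℝ) 1) :
    0 < (Qf s).eval x ∧
    |Real.sqrt |x - 1/2| - (Pf s).eval x / (Qf s).eval x| ≤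
      Real.sqrt (4*Real.exp (-(s:ℝ)/8)) + 8*Real.exp (-(s:ℝ)/8) := by
  obtain ⟨hx0, hx1⟩ := hx
  set e := Real.exp (-(s:ℝ)/8) with hedef
  have hepos : 0 < e := Real.exp_pos _
  have he14 : e ≤ 1/4 := eps_le hs
  set t := (x - 1/2)^2 with htdef
  have ht0 : 0 ≤ t := sq_nonneg _
  have ht1 : t ≤ 1 := by rw [htdef]; nlinarith
  obtain ⟨hD1, hz0nn, hz0err⟩ := stage hs ht0 ht1
  set z0 := (NN s).eval t / (DD s).eval t with hz0def
  have hst1 : Real.sqrt t ≤ 1 := Real.sqrt_le_one.2 ht1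
  have hst0 : 0 ≤ Real.sqrt t := Real.sqrt_nonneg t
  have hz0le : z0 ≤ 2 := by
    have := abs_le.1 hz0err
    linarith [this.1]
  set z := z0/2 with hzdef
  have hz0' : 0 ≤ z := by positivity
  have hz1 : z ≤ 1 := by rw [hzdef]; linarith
  obtain ⟨hD2, hz2nn, hz2err⟩ := stage hs hz0' hz1
  -- eval identities
  have hDpt : (Dp s).eval t = 2 * (DD s).eval t := by simp [Dp]
  have hDptne : (Dp s).eval t ≠ 0 := by rw [hDpt]; positivity
  have hNpt : (NN s).eval t / (Dp s).eval t = z := by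
    rw [hDpt, hzdef, hz0def]
    rw [div_div]
    congr 1
    ring
  have hP1 : (P1 s).eval t = (Dp s).eval t ^ (s^2+1) * (NN s).eval z := by
    rw [P1, hom_eval _ _ _ _ (natDegree_NN s) t hDptne, hNpt]
  have hQ1 : (Q1 s).eval t = (Dp s).eval t ^ (s^2+1) * (DD s).eval z := by
    rw [Q1, hom_eval _ _ _ _ ((natDegree_DD s).trans (by omega)) t hDptne, hNpt]
  have hDppos : 0 < (Dp s).eval t := by rw [hDpt]; positivity
  have hQ1pos : 0 < (Q1 s).eval t := by
    rw [hQ1]; exact mul_pos (pow_pos hDppos _) hD2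
  have hgx : gP.eval x = t := by simp [gP, htdef]
  have hQf : (Qf s).eval x = (Q1 s).eval t := by rw [Qf, eval_comp, hgx]
  have hPf : (Pf s).eval x = Real.sqrt 2 * (P1 s).eval t := by
    rw [Pf, eval_mul, eval_C, eval_comp, hgx]
  refine ⟨by rw [hQf]; exact hQ1pos, ?_⟩
  have hratio : (Pf s).eval x / (Qf s).eval x
      = Real.sqrt 2 * ((NN s).eval z / (DD s).eval z) := by
    rw [hPf, hQf, hP1, hQ1, mul_div_assoc]
    congr 1
    rw [mul_div_mul_left _ _ (ne_of_gt (pow_pos hDppos _))]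
  rw [hratio]
  have habs : |x - 1/2| = Real.sqrt t := by
    rw [htdef, Real.sqrt_sq_eq_abs]
  rw [habs]
  have hsqz : Real.sqrt z0 = Real.sqrt 2 * Real.sqrt z := by
    rw [show z0 = 2*z by rw [hzdef]; ring, Real.sqrt_mul (by norm_num)]
  have h2le : Real.sqrt 2 ≤ 2 := by
    nlinarith [Real.sq_sqrt (by norm_num : (0:ℝ) ≤ 2), Real.sqrt_nonneg 2]
  have hfirst : |Real.sqrt (Real.sqrt t) - Real.sqrt z0| ≤ Real.sqrt (4*e) := by
    refine (sqrt_diff hst0 hz0nn).trans ?_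
    exact Real.sqrt_le_sqrt hz0err
  have hsecond : |Real.sqrt z0 - Real.sqrt 2 * ((NN s).eval z / (DD s).eval z)| ≤ 8*e := by
    rw [hsqz, ← mul_sub, abs_mul, abs_of_nonneg (Real.sqrt_nonneg 2)]
    calc Real.sqrt 2 * |Real.sqrt z - (NN s).eval z / (DD s).eval z|
        ≤ 2 * (4*e) := by
          refine mul_le_mul h2le hz2err (abs_nonneg _) (by norm_num)
      _ = 8*e := by ring
  calc |Real.sqrt (Real.sqrt t) - Real.sqrt 2 * ((NN s).eval z / (DD s).eval z)|
      ≤ |Real.sqrt (Real.sqrt t) - Real.sqrt z0|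
        + |Real.sqrt z0 - Real.sqrt 2 * ((NN s).eval z / (DD s).eval z)| :=
          abs_sub_le _ _ _
    _ ≤ Real.sqrt (4*e) + 8*e := add_le_add hfirst hsecond


lemma numeric {n : ℕ} (hn : 1 ≤ n) :
    Real.sqrt (4*Real.exp (-(((64*n:ℕ)):ℝ)/8)) + 8*Real.exp (-(((64*n:ℕ)):ℝ)/8)
      ≤ (2:ℝ)^(-(n:ℤ)) := by
  have harg : -(((64*n:ℕ)):ℝ)/8 = -(8*(n:ℝ)) := by push_cast; ring
  rw [harg]
  set E := Real.exp (-(4*(n:ℝ))) with hEdef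
  have hEpos : 0 < E := Real.exp_pos _
  have hE : Real.exp (-(8*(n:ℝ))) = E^2 := by
    rw [hEdef, sq, ← Real.exp_add]; congr 1; ring
  have hsqrt : Real.sqrt (4*E^2) = 2*E := by
    rw [show 4*E^2 = (2*E)^2 by ring, Real.sqrt_sq (by positivity)]
  rw [hE, hsqrt]
  have h4 : (20:ℝ) ≤ Real.exp 4 := by
    have h : Real.exp 4 = (Real.exp 1)^4 := by
      rw [← Real.exp_nat_mul]; norm_num
    have he := Real.exp_one_gt_d9
    have hsq : (7:ℝ) ≤ (Real.exp 1)^2 := by nlinarith [he, Real.exp_pos 1]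
    have hq : (20:ℝ) ≤ ((Real.exp 1)^2)^2 := by nlinarith [hsq]
    rw [h, show (Real.exp 1)^4 = ((Real.exp 1)^2)^2 by ring]
    exact hq
  have h20 : Real.exp (-(4:ℝ)) ≤ 1/20 := by
    rw [Real.exp_neg, inv_le_comm₀ (Real.exp_pos 4) (by norm_num)]
    norm_num; linarith
  have hE20 : E ≤ (1/20)^n := by
    have h1 : (Real.exp (-(4:ℝ)))^n = E := by
      rw [← Real.exp_nat_mul, hEdef]; congr 1; ring
    rw [← h1]
    exact pow_le_pow_left₀ (Real.exp_pos _).le h20 n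
  have h120 : ((1:ℝ)/20)^n ≤ 1/20 := by
    calc ((1:ℝ)/20)^n ≤ (1/20)^1 :=
          pow_le_pow_of_le_one (by norm_num) (by norm_num) hn
      _ = 1/20 := pow_one _
  have hEsmall : E ≤ 1/8 := by linarith
  have h8E : 8*E^2 ≤ E := by nlinarith
  have hfin : (3:ℝ)*(1/20)^n ≤ (1/2)^n := by
    have hsplit : ((1:ℝ)/20)^n = (1/10)^n * (1/2)^n := by
      rw [← mul_pow]; norm_num
    have h10 : ((1:ℝ)/10)^n ≤ 1/10 := by
      calc ((1:ℝ)/10)^n ≤ (1/10)^1 :=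
            pow_le_pow_of_le_one (by norm_num) (by norm_num) hn
        _ = 1/10 := pow_one _
    have hp2 : (0:ℝ) ≤ (1/2)^n := by positivity
    rw [hsplit]
    nlinarith
  have hzpow : ((2:ℝ))^(-(n:ℤ)) = (1/2)^n := by
    rw [zpow_neg, zpow_natCast, ← inv_pow, one_div]
  rw [hzpow]
  calc 2*E + 8*E^2 ≤ 3*E := by linarith
    _ ≤ 3*(1/20)^n := by linarith
    _ ≤ (1/2)^n := hfin

end SqrtApprox

/-- Proposition 3.3.7: rational approximation of `x ↦ √|x - 1/2|` on `[0,1]`. -/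
theorem sqrt_abs_rational_approx :
    ∃ C : ℕ, ∀ n : ℕ, 1 ≤ n →
      ∃ p q : Polynomial ℝ,
        p.degree ≤ (C * n ^ 4 : ℕ) ∧ q.degree ≤ (C * n ^ 4 : ℕ) ∧
        (∀ x ∈ Set.Icc (0 : ℝ) 1, 1 ≤ q.eval x) ∧
        (∀ x ∈ Set.Icc (0 : ℝ) 1,
          |Real.sqrt |x - 1 / 2| - p.eval x / q.eval x| ≤ (2 : ℝ) ^ (-(n : ℤ))) := by
  classical
  refine ⟨33570818, fun n hn => ?_⟩
  have hs16 : 16 ≤ 64*n := by omega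
  set s := 64*n with hsdef
  obtain ⟨x₀, hx₀, hmin⟩ := isCompact_Icc.exists_isMinOn
    (Set.nonempty_Icc.2 (by norm_num : (0:ℝ) ≤ 1))
    ((SqrtApprox.Qf s).continuous.continuousOn)
  have hQ0 : 0 < (SqrtApprox.Qf s).eval x₀ := (SqrtApprox.key hs16 hx₀).1
  set c := ((SqrtApprox.Qf s).eval x₀)⁻¹ with hcdef
  have hc : 0 < c := inv_pos.2 hQ0
  have hdegnum : 2*(s^2+1)^2 ≤ 33570818 * n^4 := by
    have h1 : n^2 ≤ n^4 := Nat.pow_le_pow_right (by omega) (by omega)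
    have h2 : 1 ≤ n^4 := Nat.one_le_pow _ _ (by omega)
    have h3 : 2*(s^2+1)^2 = 33554432*n^4 + 16384*n^2 + 2 := by
      rw [hsdef]; ring
    rw [h3]
    nlinarith
  refine ⟨Polynomial.C c * SqrtApprox.Pf s, Polynomial.C c * SqrtApprox.Qf s, ?_, ?_, ?_, ?_⟩
  · refine Polynomial.degree_le_of_natDegree_le ?_
    refine (Polynomial.natDegree_C_mul_le _ _).trans ?_
    exact (SqrtApprox.Pf_deg _).trans hdegnum
  · refine Polynomial.degree_le_of_natDegree_le ?_
    refine (Polynomial.natDegree_C_mul_le _ _).trans ?_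
    exact (SqrtApprox.Qf_deg _).trans hdegnum
  · intro x hx
    rw [Polynomial.eval_mul, Polynomial.eval_C]
    have hmin' : (SqrtApprox.Qf s).eval x₀ ≤ (SqrtApprox.Qf s).eval x :=
      isMinOn_iff.1 hmin x hx
    calc (1:ℝ) = c * (SqrtApprox.Qf s).eval x₀ := by
          rw [hcdef]; field_simp
      _ ≤ c * (SqrtApprox.Qf s).eval x := mul_le_mul_of_nonneg_left hmin' hc.le
  · intro x hx
    rw [Polynomial.eval_mul, Polynomial.eval_mul, Polynomial.eval_C,
      mul_div_mul_left _ _ (ne_of_gt hc)]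
    exact le_trans (SqrtApprox.key hs16 hx).2 (SqrtApprox.numeric hn)
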